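/- The even part A₀ of a ℤ₂-graded semisimple finite-dimensional complex algebra A is a semisimple algebra. -/

import Mathlib

/-- The even part `A₀` of a finite-dimensional semisimple
`ℤ₂`-graded complex algebra `A = A₀ ⊕ A₁` is a semisimple algebra. -/
theorem stmt6 {A : Type*} [Ring A] [Algebra ℂ A] [FiniteDimensional ℂ A]
    (A₀ : Subalgebra ℂ A) (A₁ : Submodule ℂ A)
    (hcompl : IsCompl A₀.toSubmodule A₁)
    (h01 : ∀ a ∈ A₀, ∀ b ∈ A₁, a * b ∈ A₁)
    (h10 : ∀ a ∈ A₁, ∀ b ∈ A₀, a * b ∈ A₁)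
    (h11 : ∀ a ∈ A₁, ∀ b ∈ A₁, a * b ∈ A₀)
    (hss : IsSemisimpleRing A) :
    IsSemisimpleRing ↥A₀ := by
  classical
  -- The linear projection `E : A → A` onto `A₀` along `A₁`.
  set e := Submodule.linearProjOfIsCompl A₀.toSubmodule A₁ hcompl with he
  set E : A →ₗ[ℂ] A := A₀.toSubmodule.subtype ∘ₗ e with hEdef
  have hEmem : ∀ x : A, E x ∈ A₀ := fun x => (e x).2
  have hdecomp : ∀ x : A, ∃ y ∈ A₀, ∃ z ∈ A₁, x = y + z := by
    intro x
    have hx : x ∈ A₀.toSubmodule ⊔ A₁ := by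
      rw [hcompl.sup_eq_top]; trivial
    obtain ⟨y, hy, z, hz, h⟩ := Submodule.mem_sup.mp hx
    exact ⟨y, hy, z, hz, h.symm⟩
  have hE2 : ∀ y ∈ A₀, ∀ z ∈ A₁, E (y + z) = y := by
    intro y hy z hz
    have h1 : e y = ⟨y, hy⟩ := Submodule.linearProjOfIsCompl_apply_left hcompl ⟨y, hy⟩
    have h2 : e z = 0 := Submodule.linearProjOfIsCompl_apply_right' hcompl hz
    simp [hEdef, map_add, h1, h2]
  have hE0 : ∀ y ∈ A₀, E y = y := by
    intro y hy
    simpa using hE2 y hy 0 (zero_mem A₁)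
  have hEmul : ∀ a ∈ A₀, ∀ x : A, E (a * x) = a * E x := by
    intro a ha x
    obtain ⟨y, hy, z, hz, rfl⟩ := hdecomp x
    rw [hE2 y hy z hz, mul_add, hE2 _ (A₀.mul_mem ha hy) _ (h01 a ha z hz)]
  have hsub : ∀ x : A, x - E x ∈ A₁ := by
    intro x
    obtain ⟨y, hy, z, hz, rfl⟩ := hdecomp x
    rw [hE2 y hy z hz]
    simpa using hz
  -- Semisimplicity of `A₀` as a module over itself.
  refine { toComplementedLattice := ⟨fun I => ?_⟩ }
  -- The left ideal of `A` generated by `I`.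
  set s : Set A := (↑) '' (I : Set ↥A₀) with hs
  set J : Submodule A A := Submodule.span A s with hJ
  obtain ⟨K, hK⟩ := exists_isCompl J
  set π : A →ₗ[A] A := J.subtype ∘ₗ Submodule.linearProjOfIsCompl J K hK with hπdef
  have hπ1 : ∀ w ∈ J, π w = w := by
    intro w hw
    simp [hπdef]; exact congrArg Subtype.val (Submodule.linearProjOfIsCompl_apply_left hK ⟨w, hw⟩)
  have hπJ : ∀ w : A, π w ∈ J := fun w => (Submodule.linearProjOfIsCompl J K hK w).2
  -- membership transfer from `s` to `I`
  have hsI : ∀ v ∈ s, ∃ hv : v ∈ A₀, (⟨v, hv⟩ : ↥A₀) ∈ I := by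
    rintro v ⟨i, hi, rfl⟩
    exact ⟨(i : ↥A₀).2, by simpa using hi⟩
  have hs0 : (0 : A) ∈ s := ⟨0, I.zero_mem, by simp⟩
  have hsadd : ∀ v ∈ s, ∀ w ∈ s, v + w ∈ s := by
    rintro v ⟨i, hi, rfl⟩ w ⟨j, hj, rfl⟩
    exact ⟨i + j, I.add_mem hi hj, by simp⟩
  -- key stability: `E (a * w) ∈ s` for every `w ∈ J`
  have hkey : ∀ w ∈ J, ∀ a : A, E (a * w) ∈ s := by
    intro w hw
    refine Submodule.span_induction (p := fun w _ => ∀ a : A, E (a * w) ∈ s)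
      ?_ ?_ ?_ ?_ hw
    · rintro v ⟨i, hi, rfl⟩ a
      have hss' : (⟨E a, hEmem a⟩ : ↥A₀) • i ∈ I := I.smul_mem _ hi
      have hmem1 : (E a) * (i : A) ∈ A₀ := A₀.mul_mem (hEmem a) (i : ↥A₀).2
      have hmem2 : (a - E a) * (i : A) ∈ A₁ := h10 _ (hsub a) _ (i : ↥A₀).2
      have hcalc : a * (i : A) = (E a) * (i : A) + (a - E a) * (i : A) := by rw [sub_mul]; abel
      rw [hcalc, hE2 _ hmem1 _ hmem2]
      exact ⟨(⟨E a, hEmem a⟩ : ↥A₀) * i, hss', rfl⟩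
    · intro a; simpa using hs0
    · intro x y hx hy px py a
      rw [mul_add, map_add]
      exact hsadd _ (px a) _ (py a)
    · intro b x hx px a
      rw [smul_eq_mul, ← mul_assoc]
      exact px (a * b)
  -- the projection `f : A₀ → I`
  have hmemI : ∀ x : ↥A₀, (⟨E (π (x : A)), hEmem _⟩ : ↥A₀) ∈ I := by
    intro x
    have h1 : E (π (x : A)) ∈ s := by
      simpa using hkey _ (hπJ (x : A)) 1
    obtain ⟨hv, hvI⟩ := hsI _ h1
    exact hvI
  set f : ↥A₀ →ₗ[↥A₀] I :=
    { toFun := fun x => ⟨⟨E (π (x : A)), hEmem _⟩, hmemI x⟩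
      map_add' := by
        intro x y
        apply Subtype.ext; apply Subtype.ext
        simp [map_add]
      map_smul' := by
        intro a x
        apply Subtype.ext; apply Subtype.ext
        have h1 : ((a • x : ↥A₀) : A) = (a : A) * (x : A) := rfl
        have h2 : π ((a : A) * (x : A)) = (a : A) * π (x : A) := by
          simpa [smul_eq_mul] using π.map_smul (a : A) (x : A)
        simp only [h1, h2, hEmul _ a.2]
        rfl } with hfdef
  have hf : ∀ x : I, f (x : ↥A₀) = x := by
    intro x
    apply Subtype.ext; apply Subtype.ext
    have hxs : ((x : ↥A₀) : A) ∈ s := ⟨(x : ↥A₀), x.2, rfl⟩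
    have hxJ : ((x : ↥A₀) : A) ∈ J := Submodule.subset_span hxs
    show E (π ((x : ↥A₀) : A)) = ((x : ↥A₀) : A)
    rw [hπ1 _ hxJ, hE0 _ ((x : ↥A₀)).2]
  exact ⟨LinearMap.ker f, LinearMap.isCompl_of_proj hf⟩
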